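/- Let $1<p<\infty$, $\ell>0$ and $F:\mathbb{R}^{N\times n}\to\mathbb{R}$ be $C^1$ with $\xi\mapsto F(\xi)-\ell|\xi|^p$ convex. Then there exists $c=c(p)\ell>0$ such that the strong $p$-monotonicity inequality $\langle F'(\xi)-F'(\eta),\xi-\eta\rangle \ge c\,(|\xi|^2+|\eta|^2)^{(p-2)/2}|\xi-\eta|^2$ holds for all $\xi,\eta\in\mathbb{R}^{N\times n}$ (with the convention that the right-hand side is $0$ when $\xi=\eta=0$). -/

import Mathlib

open scoped RealInnerProductSpace
open Real

section aux
variable {E : Type*} [NormedAddCommGroup E] [InnerProductSpace ℝ E] [CompleteSpace E]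

lemma aux_hasGradientAt_norm_rpow (p : ℝ) (hp : 1 < p) (x : E) :
    HasGradientAt (fun y : E => ‖y‖ ^ p) ((p * ‖x‖ ^ (p - 2)) • x) x := by
  have key : ∀ y : E, ‖y‖ ^ p = (‖y‖ ^ 2) ^ (p / 2) := by
    intro y
    rw [← Real.rpow_natCast ‖y‖ 2, ← Real.rpow_mul (norm_nonneg y)]
    congr 1
    push_cast; ring
  rcases eq_or_ne x 0 with rfl | hx
  · -- gradient is 0 at 0
    rw [smul_zero]
    rw [hasGradientAt_iff_isLittleO]
    simp only [map_zero, sub_zero, inner_zero_left, norm_zero,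
      Real.zero_rpow (by positivity : p ≠ 0)]
    have hlim : Filter.Tendsto (fun y : E => ‖y‖ ^ (p - 1)) (nhds 0) (nhds 0) := by
      have h0 : Filter.Tendsto (fun y : E => ‖y‖) (nhds 0) (nhds 0) := by
        simpa using (continuous_norm (E := E)).tendsto 0
      have h1 : ContinuousAt (fun t : ℝ => t ^ (p - 1)) 0 :=
        Real.continuousAt_rpow_const 0 (p - 1) (Or.inr (by linarith))
      have := h1.tendsto.comp h0
      simpa [Function.comp_def, Real.zero_rpow (by linarith : p - 1 ≠ 0)] using this
    rw [Asymptotics.isLittleO_iff]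
    intro c hc
    filter_upwards [hlim.eventually (eventually_le_nhds hc)] with y hy
    rcases eq_or_ne y 0 with rfl | hy0
    · simp [Real.zero_rpow (by positivity : p ≠ 0)]
    · have hny : (0:ℝ) < ‖y‖ := norm_pos_iff.2 hy0
      have : ‖y‖ ^ p = ‖y‖ ^ (p - 1) * ‖y‖ := by
        rw [← Real.rpow_add_one hny.ne' (p-1)]; ring_nf
      rw [Real.norm_eq_abs, abs_of_nonneg (Real.rpow_nonneg (norm_nonneg y) p), this]
      exact mul_le_mul_of_nonneg_right hy (norm_nonneg y)
  · have hnx : (0:ℝ) < ‖x‖ := norm_pos_iff.2 hx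
    have h2 : HasFDerivAt (fun y : E => ‖y‖ ^ 2) (2 • (innerSL ℝ x)) x :=
      (hasStrictFDerivAt_norm_sq x).hasFDerivAt
    have h3 := h2.rpow_const (p := p / 2) (Or.inl (by positivity))
    have h4 : HasFDerivAt (fun y : E => ‖y‖ ^ p)
        ((p / 2 * (‖x‖ ^ 2) ^ (p / 2 - 1)) • (2 • (innerSL ℝ x))) x := by
      simpa only [← key] using h3
    rw [hasGradientAt_iff_hasFDerivAt]
    have hc : (‖x‖ ^ 2 : ℝ) ^ (p / 2 - 1) = ‖x‖ ^ (p - 2) := by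
      rw [← Real.rpow_natCast ‖x‖ 2, ← Real.rpow_mul (norm_nonneg x)]
      congr 1
      push_cast; ring
    refine h4.congr_fderiv ?_
    ext y
    simp only [InnerProductSpace.toDual_apply_apply, ContinuousLinearMap.smul_apply,
      ContinuousLinearMap.coe_smul', Pi.smul_apply, innerSL_apply_apply, real_inner_smul_left, hc,
      smul_eq_mul]
    ring
end aux
variable {E : Type*} [NormedAddCommGroup E] [InnerProductSpace ℝ E] [CompleteSpace E]

lemma aux_monotone_gradient {G : E → ℝ} {g : E → E}
    (hconv : ConvexOn ℝ Set.univ G) (hg : ∀ x, HasGradientAt G (g x) x)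
    (ξ η : E) : 0 ≤ ⟪g ξ - g η, ξ - η⟫ := by
  set d := ξ - η with hd
  set c : ℝ → E := fun t => η + t • d with hcdef
  have hder : ∀ t : ℝ, HasDerivAt (fun s : ℝ => G (c s)) ⟪g (c t), d⟫ t := by
    intro t
    have h1 : HasDerivAt c d t := by
      simpa [hcdef] using ((hasDerivAt_id t).smul_const d).const_add η
    have h2 := (hg (c t)).hasFDerivAt.comp_hasDerivAt t h1
    simpa [InnerProductSpace.toDual_apply_apply, Function.comp_def] using h2
  have hφconv : ConvexOn ℝ Set.univ (fun s : ℝ => G (c s)) := by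
    have := hconv.comp_affineMap (AffineMap.lineMap η ξ : ℝ →ᵃ[ℝ] E)
    simp only [Set.preimage_univ] at this
    have heq : (fun s : ℝ => G (c s)) = G ∘ ⇑(AffineMap.lineMap η ξ : ℝ →ᵃ[ℝ] E) := by
      funext s
      simp [hcdef, AffineMap.lineMap_apply, hd, Function.comp, add_comm]
    rw [heq]; exact this
  have h01 : (0:ℝ) < 1 := one_pos
  have hA := hφconv.le_slope_of_hasDerivAt (Set.mem_univ 0) (Set.mem_univ 1) h01 (hder 0)
  have hB := hφconv.slope_le_of_hasDerivAt (Set.mem_univ 0) (Set.mem_univ 1) h01 (hder 1)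
  have hc0 : c 0 = η := by simp [hcdef]
  have hc1 : c 1 = ξ := by simp [hcdef, hd]
  rw [hc0] at hA
  rw [hc1] at hB
  have := hA.trans hB
  rw [inner_sub_left]
  linarith

lemma aux_bern (p : ℝ) (hp : 1 < p) (s : ℝ) (hs0 : 0 ≤ s) (hs1 : s ≤ 1) :
    min 1 (p - 1) * (1 - s) ≤ 1 - s ^ (p - 1) := by
  have hm1 : min 1 (p-1) ≤ 1 := min_le_left _ _
  have hmp : min 1 (p-1) ≤ p - 1 := min_le_right _ _
  rcases le_or_gt p 2 with hp2 | hp2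
  · have hb := rpow_one_add_le_one_add_mul_self (s := s - 1) (by linarith)
      (p := p - 1) (by linarith) (by linarith)
    have he : (1 + (s - 1)) = s := by ring
    rw [he] at hb
    nlinarith [sub_nonneg.2 hs1]
  · have hs : s ^ (p - 1) ≤ s := by
      rcases eq_or_lt_of_le hs0 with rfl | hs0'
      · rw [Real.zero_rpow (by linarith : p - 1 ≠ 0)]
      · calc s ^ (p-1) ≤ s ^ (1:ℝ) :=
              Real.rpow_le_rpow_of_exponent_ge hs0' hs1 (by linarith)
          _ = s := Real.rpow_one s
    nlinarith [sub_nonneg.2 hs1]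

set_option maxHeartbeats 1000000 in
lemma aux_key (p : ℝ) (hp : 1 < p) (A B t : ℝ) (hB : 0 ≤ B)
    (hBA : B ≤ A) (ht : |t| ≤ A * B) :
    min 1 (p-1) / (2 * max 1 ((2:ℝ) ^ ((p - 2)/2))) *
      ((A^2 + B^2) ^ ((p-2)/2) * (A^2 + B^2 - 2*t))
    ≤ A ^ (p-2) * (A^2 - t) + B ^ (p-2) * (B^2 - t) := by
  have hA : 0 ≤ A := hB.trans hBA
  obtain ⟨ht2, ht1⟩ := abs_le.1 ht
  set m := min 1 (p-1) with hmdef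
  set M := max 1 ((2:ℝ) ^ ((p - 2)/2)) with hMdef
  have hm : 0 < m := lt_min one_pos (by linarith)
  have hm1 : m ≤ 1 := min_le_left _ _
  have hM : 1 ≤ M := le_max_left _ _
  have hM0 : 0 < M := lt_of_lt_of_le one_pos hM
  set c' := m / (2 * M) with hc'def
  have hc'0 : 0 < c' := by positivity
  rcases eq_or_lt_of_le hA with hA0 | hApos
  · have hB0 : B = 0 := le_antisymm (by linarith) hB
    subst hB0
    rw [← hA0] at ht ⊢
    have habs : |t| ≤ 0 := by simpa using ht
    have ht0 : t = 0 := abs_eq_zero.1 (le_antisymm habs (abs_nonneg t))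
    subst ht0
    simp
  · set u := A ^ (p-2) with hudef
    set v := B ^ (p-2) with hvdef
    have hu0 : 0 ≤ u := Real.rpow_nonneg hA _
    have hv0 : 0 ≤ v := Real.rpow_nonneg hB _
    have huA : u * A = A ^ (p-1) := by
      rw [hudef, ← Real.rpow_add_one (ne_of_gt hApos) (p-2)]; congr 1; ring
    have hvB : v * B = B ^ (p-1) := by
      rcases eq_or_lt_of_le hB with hB0 | hBpos
      · rw [← hB0, Real.zero_rpow (by linarith : p - 1 ≠ 0), mul_zero]
      · rw [hvdef, ← Real.rpow_add_one (ne_of_gt hBpos) (p-2)]; congr 1; ring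
    have hvBuA : v * B ≤ u * A := by
      rw [huA, hvB]; exact Real.rpow_le_rpow hB hBA (by linarith)
    set R := (A^2 + B^2) ^ ((p-2)/2) with hRdef
    have hR0 : 0 ≤ R := Real.rpow_nonneg (by positivity) _
    have hA2 : (A^2 : ℝ) ^ ((p-2)/2) = u := by
      rw [hudef, ← Real.rpow_natCast A 2, ← Real.rpow_mul hA]
      congr 1; push_cast; ring
    have hR : R ≤ M * u := by
      rcases le_or_gt p 2 with hp2 | hp2
      · have h1 : R ≤ (A^2 : ℝ) ^ ((p-2)/2) := by
          apply Real.rpow_le_rpow_of_nonpos (by positivity) (by nlinarith) (by linarith)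
        rw [hA2] at h1
        nlinarith
      · have h1 : R ≤ (2 * A^2 : ℝ) ^ ((p-2)/2) := by
          apply Real.rpow_le_rpow (by positivity) (by nlinarith) (by linarith)
        rw [Real.mul_rpow (by norm_num) (by positivity), hA2] at h1
        have h2 : (2:ℝ) ^ ((p-2)/2) ≤ M := le_max_right _ _
        nlinarith
    have hE1 : m * u * (A - B) ≤ u * A - v * B := by
      have hAp1 : 0 < A ^ (p-1) := Real.rpow_pos_of_pos hApos _
      have hs := aux_bern p hp (B / A) (by positivity) ((div_le_one hApos).2 hBA)
      rw [Real.div_rpow hB hApos.le] at hs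
      have h2 := mul_le_mul_of_nonneg_left hs hAp1.le
      calc m * u * (A - B) = A ^ (p-1) * (m * (1 - B/A)) := by
            rw [← huA]; field_simp
        _ ≤ A ^ (p-1) * (1 - B ^ (p-1) / A ^ (p-1)) := h2
        _ = A ^ (p-1) - B ^ (p-1) := by field_simp
        _ = u * A - v * B := by rw [huA, hvB]
    clear_value u v R m M c'
    -- endpoint inequalities
    have hcRu : c' * R ≤ m * u / 2 := by
      have h1 : c' * R ≤ c' * (M * u) := by
        apply mul_le_mul_of_nonneg_left hR hc'0.le
      have h2 : c' * (M * u) = m * u / 2 := by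
        rw [hc'def]; field_simp
      linarith
    have hend1 : c' * R * (A - B)^2 ≤ (u * A - v * B) * (A - B) := by
      have h3 : c' * R * (A - B)^2 ≤ m * u / 2 * (A - B)^2 := by
        apply mul_le_mul_of_nonneg_right hcRu (sq_nonneg _)
      have h4 : m * u / 2 * (A - B)^2 ≤ m * u * (A - B) * (A - B) := by
        nlinarith [sq_nonneg (A - B), mul_nonneg (mul_nonneg hm.le hu0) (sq_nonneg (A-B))]
      nlinarith [mul_le_mul_of_nonneg_right hE1 (by linarith : (0:ℝ) ≤ A - B)]
    have hend2 : c' * R * (A + B)^2 ≤ (u * A + v * B) * (A + B) := by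
      have h3 : c' * R * (A + B)^2 ≤ u / 2 * (A + B)^2 := by
        apply mul_le_mul_of_nonneg_right _ (sq_nonneg _)
        calc c' * R ≤ m * u / 2 := hcRu
          _ ≤ u / 2 := by nlinarith
      have h4 : u / 2 * (A + B)^2 ≤ u * A * (A + B) := by
        nlinarith [mul_nonneg hu0 (mul_nonneg (by linarith : (0:ℝ) ≤ A - B) (by linarith : (0:ℝ) ≤ A + B))]
      nlinarith [mul_nonneg (mul_nonneg hv0 hB) (by linarith : (0:ℝ) ≤ A + B)]
    -- interpolate in t
    have hgoal : c' * R * (A^2 + B^2 - 2*t) ≤ u * (A^2 - t) + v * (B^2 - t) := by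
      have e1 : u * (A^2 - A*B) + v * (B^2 - A*B) = (u * A - v * B) * (A - B) := by ring
      have e2 : u * (A^2 + A*B) + v * (B^2 + A*B) = (u * A + v * B) * (A + B) := by ring
      have h1 : c' * R * (A^2 + B^2 - 2*(A*B)) ≤ u * (A^2 - A*B) + v * (B^2 - A*B) := by
        rw [e1]
        have : (A - B)^2 = A^2 + B^2 - 2*(A*B) := by ring
        rw [← this]; exact hend1
      have h2 : c' * R * (A^2 + B^2 + 2*(A*B)) ≤ u * (A^2 + A*B) + v * (B^2 + A*B) := by
        rw [e2]
        have : (A + B)^2 = A^2 + B^2 + 2*(A*B) := by ring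
        rw [← this]; exact hend2
      rcases eq_or_lt_of_le (mul_nonneg hA hB) with hAB0 | hABpos
      · have ht0 : t = 0 := by
          have : |t| ≤ 0 := by rw [← hAB0] at ht; exact ht
          exact abs_eq_zero.1 (le_antisymm this (abs_nonneg t))
        subst ht0
        rw [← hAB0] at h1 h2
        simp only [mul_zero, sub_zero, add_zero, mul_zero] at h1 h2 ⊢
        linarith
      · nlinarith [mul_nonneg (by linarith : (0:ℝ) ≤ A*B - t)
            (by linarith : (0:ℝ) ≤ u * (A^2 + A*B) + v * (B^2 + A*B) - c' * R * (A^2 + B^2 + 2*(A*B))),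
          mul_nonneg (by linarith : (0:ℝ) ≤ A*B + t)
            (by linarith : (0:ℝ) ≤ u * (A^2 - A*B) + v * (B^2 - A*B) - c' * R * (A^2 + B^2 - 2*(A*B)))]
    rw [← mul_assoc]
    exact hgoal
section aux2
variable {E : Type*} [NormedAddCommGroup E] [InnerProductSpace ℝ E] [CompleteSpace E]

lemma aux_grad_const_mul {f : E → ℝ} {g x : E} (c : ℝ) (h : HasGradientAt f g x) :
    HasGradientAt (fun y => c * f y) (c • g) x := by
  rw [hasGradientAt_iff_hasFDerivAt] at h ⊢
  rw [map_smul]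
  exact h.const_mul c

lemma aux_grad_sub {f₁ f₂ : E → ℝ} {g₁ g₂ x : E} (h₁ : HasGradientAt f₁ g₁ x)
    (h₂ : HasGradientAt f₂ g₂ x) :
    HasGradientAt (fun y => f₁ y - f₂ y) (g₁ - g₂) x := by
  rw [hasGradientAt_iff_hasFDerivAt] at h₁ h₂ ⊢
  rw [map_sub]
  exact h₁.sub h₂
end aux2

theorem stmt7 {N n : ℕ} (F : EuclideanSpace ℝ (Fin N × Fin n) → ℝ)
    (p ℓ : ℝ) (hp : 1 < p) (hℓ : 0 < ℓ)
    (hC1 : ContDiff ℝ 1 F)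
    (hconv : ConvexOn ℝ Set.univ (fun ξ => F ξ - ℓ * ‖ξ‖ ^ p)) :
    ∃ cp : ℝ, 0 < cp ∧ ∀ ξ η : EuclideanSpace ℝ (Fin N × Fin n),
      ⟪gradient F ξ - gradient F η, ξ - η⟫ ≥
        cp * ℓ * ((‖ξ‖ ^ 2 + ‖η‖ ^ 2) ^ ((p - 2) / 2) * ‖ξ - η‖ ^ 2) := by
  have hm : (0:ℝ) < min 1 (p-1) := lt_min one_pos (by linarith)
  have hM : (0:ℝ) < max 1 ((2:ℝ) ^ ((p - 2)/2)) := lt_of_lt_of_le one_pos (le_max_left _ _)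
  set c' := min 1 (p-1) / (2 * max 1 ((2:ℝ) ^ ((p - 2)/2))) with hc'def
  have hc'0 : 0 < c' := by positivity
  refine ⟨p * c', by positivity, fun ξ η => ?_⟩
  -- gradients
  have hFgrad : ∀ x : EuclideanSpace ℝ (Fin N × Fin n), HasGradientAt F (gradient F x) x := fun x =>
    ((hC1.differentiable one_ne_zero) x).hasGradientAt
  set v : EuclideanSpace ℝ (Fin N × Fin n) → EuclideanSpace ℝ (Fin N × Fin n) := fun x => (ℓ * (p * ‖x‖ ^ (p - 2))) • x with hvdef
  have hvgrad : ∀ x : EuclideanSpace ℝ (Fin N × Fin n), HasGradientAt (fun y : EuclideanSpace ℝ (Fin N × Fin n) => ℓ * ‖y‖ ^ p) (v x) x := by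
    intro x
    have := aux_grad_const_mul ℓ (aux_hasGradientAt_norm_rpow p hp x)
    rwa [smul_smul] at this
  have hGgrad : ∀ x : EuclideanSpace ℝ (Fin N × Fin n), HasGradientAt (fun y : EuclideanSpace ℝ (Fin N × Fin n) => F y - ℓ * ‖y‖ ^ p)
      (gradient F x - v x) x := fun x => aux_grad_sub (hFgrad x) (hvgrad x)
  have hmono := aux_monotone_gradient hconv hGgrad ξ η
  have hsplit : ⟪(gradient F ξ - v ξ) - (gradient F η - v η), ξ - η⟫
      = ⟪gradient F ξ - gradient F η, ξ - η⟫ - ⟪v ξ - v η, ξ - η⟫ := by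
    simp only [inner_sub_left]; ring
  rw [hsplit] at hmono
  -- compute the inner product of the p-power gradients
  set t := ⟪ξ, η⟫ with htdef
  have hinner : ⟪v ξ - v η, ξ - η⟫
      = ℓ * p * (‖ξ‖ ^ (p-2) * (‖ξ‖^2 - t) + ‖η‖ ^ (p-2) * (‖η‖^2 - t)) := by
    have hcomm : ⟪η, ξ⟫ = t := by rw [htdef]; exact real_inner_comm ξ η
    simp only [hvdef, inner_sub_left, real_inner_smul_left, inner_sub_right,
      real_inner_self_eq_norm_sq, ← htdef]
    rw [hcomm]
    ring
  have hts : |t| ≤ ‖ξ‖ * ‖η‖ := abs_real_inner_le_norm ξ η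
  have hnorm : ‖ξ - η‖^2 = ‖ξ‖^2 + ‖η‖^2 - 2*t := by
    rw [norm_sub_sq_real]; ring
  have hkey : c' * ((‖ξ‖^2 + ‖η‖^2) ^ ((p-2)/2) * (‖ξ‖^2 + ‖η‖^2 - 2*t))
      ≤ ‖ξ‖ ^ (p-2) * (‖ξ‖^2 - t) + ‖η‖ ^ (p-2) * (‖η‖^2 - t) := by
    rcases le_total ‖η‖ ‖ξ‖ with hle | hle
    · exact aux_key p hp ‖ξ‖ ‖η‖ t (norm_nonneg η) hle hts
    · have := aux_key p hp ‖η‖ ‖ξ‖ t (norm_nonneg ξ) hle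
        (by rwa [mul_comm])
      rw [add_comm (‖η‖^2) (‖ξ‖^2)] at this
      linarith
  have hscaled := mul_le_mul_of_nonneg_left hkey (le_of_lt (mul_pos hℓ (by linarith : (0:ℝ) < p)))
  rw [← hinner] at hscaled
  rw [ge_iff_le, hnorm]
  calc p * c' * ℓ * ((‖ξ‖^2 + ‖η‖^2) ^ ((p-2)/2) * (‖ξ‖^2 + ‖η‖^2 - 2*t))
      = ℓ * p * (c' * ((‖ξ‖^2 + ‖η‖^2) ^ ((p-2)/2) * (‖ξ‖^2 + ‖η‖^2 - 2*t))) := by ring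
    _ ≤ ⟪v ξ - v η, ξ - η⟫ := hscaled
    _ ≤ ⟪gradient F ξ - gradient F η, ξ - η⟫ := by linarith
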